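/- Let χ be an integer, a a positive integer divisible by 3, and p a partition of a that has at least one part not divisible by 3. Writing d_i = p_i − p_{i+1} for i ≥ 1, the finite product ∏_{i≥1} C(3iχ − 1 + d_i, d_i) is divisible by 9. -/

import Mathlib

open Finset

section Aux
open Polynomial

lemma factorial_mul_ringChoose (r : ℤ) (k : ℕ) :
    (k.factorial : ℤ) * Ring.choose r k = (descPochhammer ℤ k).eval r := by
  rw [eval_eq_smeval, Ring.descPochhammer_eq_factorial_smul_choose, nsmul_eq_mul]

lemma ringChoose_nonneg (r : ℤ) (h : 0 ≤ r) (k : ℕ) :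
    Ring.choose r k = (r.toNat.choose k : ℤ) := by
  have : r = ((r.toNat : ℕ) : ℤ) := by omega
  conv_lhs => rw [this]
  rw [Ring.choose_natCast]

lemma ringChoose_reflect (r : ℤ) (k : ℕ) :
    Ring.choose r k = (-1)^k * Ring.choose ((k:ℤ) - 1 - r) k := by
  have h := factorial_mul_ringChoose r k
  have h2 := factorial_mul_ringChoose ((k:ℤ) - 1 - r) k
  have key : (descPochhammer ℤ k).eval r = (-1)^k * (descPochhammer ℤ k).eval ((k:ℤ) - 1 - r) := by
    rw [descPochhammer_eval_eq_ascPochhammer]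
    have : r - (k:ℤ) + 1 = -((k:ℤ) - 1 - r) := by ring
    rw [this, ascPochhammer_eval_neg_eq_descPochhammer]
  have hfac : (k.factorial : ℤ) ≠ 0 := by exact_mod_cast k.factorial_ne_zero
  apply mul_left_cancel₀ hfac
  rw [h, key, ← h2]; ring

lemma nat_lucas3 (n k : ℕ) :
    (3:ℤ) ∣ (n.choose k : ℤ) - ((n % 3).choose (k % 3) : ℤ) * ((n / 3).choose (k / 3) : ℤ) := by
  haveI : Fact (Nat.Prime 3) := ⟨by norm_num⟩
  have h := Choose.choose_modEq_choose_mod_mul_choose_div (n := n) (k := k) (p := 3)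
  have := h.dvd
  push_cast at this ⊢
  exact dvd_sub_comm.mp this

lemma lucas_int (A : ℤ) (B s t : ℕ) (hs : s < 3) (ht : t < 3) :
    (3:ℤ) ∣ Ring.choose (3*A + s) (3*B + t) - (s.choose t : ℤ) * Ring.choose A B := by
  rcases le_or_gt 0 A with hA | hA
  · have h1 : Ring.choose (3*A + (s:ℤ)) (3*B+t) = ((3*A.toNat + s).choose (3*B+t) : ℤ) := by
      rw [ringChoose_nonneg _ (by omega)]
      congr 2
      omega
    have h2 : Ring.choose A B = (A.toNat.choose B : ℤ) := ringChoose_nonneg _ hA _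
    rw [h1, h2]
    have h := nat_lucas3 (3*A.toNat + s) (3*B+t)
    have e1 : (3*A.toNat + s) % 3 = s := by omega
    have e2 : (3*B + t) % 3 = t := by omega
    have e3 : (3*A.toNat + s) / 3 = A.toNat := by omega
    have e4 : (3*B + t) / 3 = B := by omega
    rwa [e1, e2, e3, e4] at h
  · -- A < 0
    have hx : 3*A + (s:ℤ) < 0 := by omega
    set k := 3*B + t with hk
    rw [ringChoose_reflect (3*A + s) k, ringChoose_reflect A B]
    have hN : (0:ℤ) ≤ (k:ℤ) - 1 - (3*A + s) := by omega
    have hM : (0:ℤ) ≤ (B:ℤ) - 1 - A := by omega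
    rw [ringChoose_nonneg _ hN, ringChoose_nonneg _ hM]
    set N : ℕ := ((k:ℤ) - 1 - (3*A + s)).toNat with hNdef
    set M : ℕ := ((B:ℤ) - 1 - A).toNat with hMdef
    have hlucas := nat_lucas3 N k
    have hk2 : k % 3 = t := by omega
    have hk3 : k / 3 = B := by omega
    rw [hk2, hk3] at hlucas
    rcases lt_or_ge s t with hst | hts
    · -- s < t : both sides divisible by 3
      have hN1 : N % 3 = t - 1 - s := by omega
      have hzero : ((N % 3).choose t) = 0 := Nat.choose_eq_zero_of_lt (by omega)
      rw [hN1] at hzero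
      rw [hN1, hzero] at hlucas
      rw [Nat.choose_eq_zero_of_lt hst]
      push_cast at hlucas ⊢
      obtain ⟨c, hc⟩ := hlucas
      exact ⟨(-1)^k * c, by linear_combination ((-1:ℤ))^k * hc⟩
    · -- t ≤ s : with borrow
      have hN1 : N % 3 = t + 2 - s := by omega
      have hN2 : N / 3 = M := by omega
      rw [hN1, hN2] at hlucas
      have hsign : ((-1:ℤ))^k = (-1)^B * (-1)^t := by
        rw [hk, pow_add, pow_mul]
        norm_num
      have hdig : (3:ℤ) ∣ (-1)^t * ((t + 2 - s).choose t : ℤ) - (s.choose t : ℤ) := by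
        interval_cases t <;> interval_cases s <;> simp_all
      obtain ⟨c, hc⟩ := hlucas
      obtain ⟨e, he⟩ := hdig
      refine ⟨(-1)^k * c + (-1)^B * e * (M.choose B : ℤ), ?_⟩
      rw [hsign]
      linear_combination ((-1:ℤ))^B * (-1)^t * hc + ((-1:ℤ))^B * (M.choose B : ℤ) * he

lemma lucas_zero (A : ℤ) (B s t : ℕ) (hst : s < t) (ht : t < 3) :
    (3:ℤ) ∣ Ring.choose (3*A + s) (3*B + t) := by
  have h := lucas_int A B s t (by omega) ht
  rw [Nat.choose_eq_zero_of_lt hst] at h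
  simpa using h


lemma absorb (r : ℤ) (q : ℕ) :
    ((q:ℤ) + 1) * Ring.choose r (q+1) = r * Ring.choose (r - 1) q := by
  have h := Ring.choose_smul_choose r (show 1 ≤ q+1 by omega)
  rw [Nat.choose_one_right] at h
  simp only [nsmul_eq_mul, Nat.add_sub_cancel, Ring.choose_one_right, Nat.cast_one] at h
  push_cast at h
  exact h

lemma aux_n_mul (n : ℤ) (q : ℕ) (h : (3:ℤ) ∣ n - q) : (3:ℤ) ∣ n * Ring.choose (n-1) q := by
  rw [← absorb n q]
  rcases (by omega : q % 3 = 0 ∨ q % 3 = 1 ∨ q % 3 = 2) with h2 | h2 | h2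
  rotate_right
  · exact Dvd.dvd.mul_right (by omega : (3:ℤ) ∣ (q:ℤ) + 1) _
  all_goals {
    set s := q % 3 with hs
    have hn : n = 3 * ((n - (s:ℤ))/3) + (s:ℤ) := by omega
    have hq : q + 1 = 3 * (q/3) + (s+1) := by omega
    rw [hq, hn]
    exact Dvd.dvd.mul_left (lucas_zero ((n - (s:ℤ))/3) (q/3) s (s+1) (by omega) (by omega)) _ }

lemma nine_of_mul (d C : ℤ) (hd : ¬ (3:ℤ) ∣ d) (h : 9 ∣ d * C) : (9:ℤ) ∣ C := by
  have hp := Int.prime_three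
  have h3 : (3:ℤ) ∣ d * C := dvd_trans (by norm_num) h
  have hC : (3:ℤ) ∣ C := ((hp.dvd_mul.mp h3).resolve_left hd)
  obtain ⟨c, rfl⟩ := hC
  have h9 : (3:ℤ) * 3 ∣ (3:ℤ) * (d * c) := by
    obtain ⟨e, he⟩ := h
    exact ⟨e, by linarith⟩
  have := (mul_dvd_mul_iff_left (show (3:ℤ) ≠ 0 by norm_num)).mp h9
  obtain ⟨f, hf⟩ := (hp.dvd_mul.mp this).resolve_left hd
  exact ⟨f, by linarith⟩

-- mod-3 congruence:  C(3n - 1, 3q + t) ≡ C(2,t) * C(n-1, q)  [t = 0 or 1]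
lemma step_lucas (n : ℤ) (q t : ℕ) (ht : t < 3) :
    (3:ℤ) ∣ Ring.choose (3*n - 1) (3*q + t) - ((Nat.choose 2 t : ℕ) : ℤ) * Ring.choose (n-1) q := by
  have h := lucas_int (n-1) q 2 t (by omega) ht
  have e : 3*(n-1) + ((2:ℕ):ℤ) = 3*n - 1 := by push_cast; ring
  rwa [e] at h

lemma nine_A (n : ℤ) (q : ℕ) (h : (3:ℤ) ∣ n - q) : (9:ℤ) ∣ Ring.choose (3*n) (3*q+1) := by
  apply nine_of_mul ((q : ℤ)*3 + 1) _ (by omega)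
  have habs := absorb (3*n) (3*q)
  have e : ((3*q : ℕ) : ℤ) + 1 = (q:ℤ)*3 + 1 := by push_cast; ring
  rw [e] at habs
  rw [habs]
  obtain ⟨c, hc⟩ := step_lucas n q 0 (by norm_num)
  obtain ⟨f, hf⟩ := aux_n_mul n q h
  rw [add_zero] at hc
  have h20 : ((Nat.choose 2 0 : ℕ) : ℤ) = 1 := by norm_num
  rw [h20] at hc
  exact ⟨f + n * c, by linear_combination 3 * n * hc + 3 * hf⟩

lemma nine_B (n : ℤ) (q : ℕ) (h : (3:ℤ) ∣ n - q) : (9:ℤ) ∣ Ring.choose (3*n) (3*q+2) := by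
  apply nine_of_mul ((q:ℤ)*3 + 2) _ (by omega)
  have habs := absorb (3*n) (3*q+1)
  have e : ((3*q+1 : ℕ) : ℤ) + 1 = (q:ℤ)*3 + 2 := by push_cast; ring
  rw [e] at habs
  rw [show (3*q+1)+1 = 3*q+2 from rfl] at habs
  rw [habs]
  obtain ⟨c, hc⟩ := step_lucas n q 1 (by norm_num)
  obtain ⟨f, hf⟩ := aux_n_mul n q h
  have h21 : ((Nat.choose 2 1 : ℕ) : ℤ) = 2 := by norm_num
  rw [h21] at hc
  exact ⟨2*f + n*c, by linear_combination 3 * n * hc + 6 * hf⟩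

lemma C1 (m : ℤ) (d : ℕ) (hd : ¬ 3 ∣ d) : (3:ℤ) ∣ Ring.choose (3*m - 1 + d) d := by
  obtain ⟨q, r, hr12, rfl⟩ : ∃ q r, (r = 1 ∨ r = 2) ∧ d = 3*q + r := ⟨d/3, d%3, by omega, by omega⟩
  have e : 3*m - 1 + ((3*q+r : ℕ):ℤ) = 3*(m+q) + ((r-1 : ℕ) : ℤ) := by
    rcases hr12 with h | h <;> subst h <;> push_cast <;> ring
  rw [e]
  exact lucas_zero (m+q) q (r-1) r (by omega) (by omega)

lemma C2 (m : ℤ) (hm : (3:ℤ) ∣ m) (d : ℕ) (hd : ¬ 3 ∣ d) :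
    (9:ℤ) ∣ Ring.choose (3*m - 1 + d) d := by
  obtain ⟨q, r, hr12, rfl⟩ : ∃ q r, (r = 1 ∨ r = 2) ∧ d = 3*q + r := ⟨d/3, d%3, by omega, by omega⟩
  have hnq : (3:ℤ) ∣ (m + q) - q := by omega
  rcases hr12 with h | h <;> subst h
  · have e : 3*m - 1 + ((3*q+1 : ℕ):ℤ) = 3*(m+q) := by push_cast; ring
    rw [e]
    exact nine_A (m+q) q hnq
  · have e : 3*m - 1 + ((3*q+2 : ℕ):ℤ) = 3*(m+q) + 1 := by push_cast; ring
    rw [e]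
    have hp := Ring.choose_succ_succ (3*(m+q) : ℤ) (3*q+1)
    rw [show (3*q+1)+1 = 3*q+2 from rfl] at hp
    rw [hp]
    exact dvd_add (nine_A (m+q) q hnq) (nine_B (m+q) q hnq)

end Aux


/-- The parts of a partition `p` of `a`, viewed as a weakly decreasing sequence
`p_1 ≥ p_2 ≥ ⋯` padded with zeros; `partSeq p i` is the part `p_{i+1}` (0-indexed). -/
def partSeq {a : ℕ} (p : Nat.Partition a) (i : ℕ) : ℕ :=
  (p.parts.sort (· ≥ ·)).getD i 0

lemma partSeq_anti {a : ℕ} (p : Nat.Partition a) (i : ℕ) : partSeq p (i+1) ≤ partSeq p i := by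
  unfold partSeq
  set L := p.parts.sort (· ≥ ·) with hL
  rcases lt_or_ge (i+1) L.length with h | h
  · rw [List.getD_eq_getElem _ _ h, List.getD_eq_getElem _ _ (by omega)]
    have hs : L.Pairwise (· ≥ ·) := p.parts.pairwise_sort _
    exact List.pairwise_iff_getElem.mp hs i (i+1) (by omega) h (by omega)
  · rw [List.getD_eq_default _ _ h]
    exact Nat.zero_le _

lemma length_le {a : ℕ} (p : Nat.Partition a) : (p.parts.sort (· ≥ ·)).length ≤ a := by
  rw [Multiset.length_sort]
  have h := Multiset.card_nsmul_le_sum (s := p.parts) (fun x hx => (p.parts_pos hx : 1 ≤ x))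
  rw [p.parts_sum] at h
  simpa using h

lemma partSeq_eq_zero {a : ℕ} (p : Nat.Partition a) (i : ℕ) (h : a ≤ i) : partSeq p i = 0 :=
  List.getD_eq_default _ _ ((length_le p).trans h)

lemma sum_range_getD (l : List ℕ) : ∀ n, l.length ≤ n → ∑ i ∈ Finset.range n, l.getD i 0 = l.sum := by
  induction l with
  | nil => intro n _; simp
  | cons x l ih =>
    intro n hn
    obtain ⟨m, rfl⟩ : ∃ m, n = m + 1 := ⟨n - 1, by simp at hn; omega⟩
    rw [Finset.sum_range_succ']
    simp only [List.getD_cons_succ, List.getD_cons_zero, List.sum_cons]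
    rw [ih m (by simpa using hn)]
    omega

lemma sum_partSeq {a : ℕ} (p : Nat.Partition a) : ∑ i ∈ Finset.range a, partSeq p i = a := by
  unfold partSeq
  rw [sum_range_getD _ a (length_le p)]
  have h2 : ((p.parts.sort (· ≥ ·) : List ℕ) : Multiset ℕ).sum = p.parts.sum := by
    rw [Multiset.sort_eq]
  rw [← Multiset.sum_coe, h2, p.parts_sum]

lemma telescope {a : ℕ} (p : Nat.Partition a) :
    ∀ k i, i + k = a → partSeq p i = ∑ j ∈ Finset.Ico i a, (partSeq p j - partSeq p (j+1)) := by
  intro k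
  induction k with
  | zero => intro i hi; rw [show i = a by omega]; simp [partSeq_eq_zero p a le_rfl]
  | succ k ih =>
    intro i hi
    rw [Finset.sum_eq_sum_Ico_succ_bot (by omega : i < a)]
    rw [← ih (i+1) (by omega)]
    have := partSeq_anti p i
    omega

lemma abel (f : ℕ → ℕ) : ∀ n, ∑ i ∈ Finset.range n, ∑ j ∈ Finset.Ico i n, f j
    = ∑ j ∈ Finset.range n, (j+1) * f j := by
  intro n
  induction n with
  | zero => simp
  | succ n ih =>
    have step : ∀ i ∈ Finset.range (n+1), ∑ j ∈ Finset.Ico i (n+1), f j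
        = (∑ j ∈ Finset.Ico i n, f j) + f n := by
      intro i hi
      rw [Finset.sum_Ico_succ_top (by simpa using Nat.lt_succ_iff.mp (Finset.mem_range.mp hi))]
    rw [Finset.sum_congr rfl step, Finset.sum_add_distrib, Finset.sum_range_succ (fun i => ∑ j ∈ Finset.Ico i n, f j)]
    simp only [Finset.Ico_self, Finset.sum_empty, add_zero]
    rw [ih, Finset.sum_const, Finset.card_range, smul_eq_mul, Finset.sum_range_succ]

lemma weighted_sum {a : ℕ} (p : Nat.Partition a) :
    ∑ j ∈ Finset.range a, (j+1) * (partSeq p j - partSeq p (j+1)) = a := by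
  rw [← abel]
  have h1 : ∀ i ∈ Finset.range a, (∑ j ∈ Finset.Ico i a, (partSeq p j - partSeq p (j+1)))
      = partSeq p i := by
    intro i hi
    exact (telescope p (a - i) i (by simp at hi; omega)).symm
  rw [Finset.sum_congr rfl h1, sum_partSeq]

/-- Let `χ ∈ ℤ`, let `a` be a positive integer divisible by `3`, and let `p` be a
partition of `a` with at least one part not divisible by `3`.  With `d_i = p_i - p_{i+1}`,
the product `∏_{i ≥ 1} C(3iχ - 1 + d_i, d_i)` is divisible by `9`.  A partition of `a`
has at most `a` parts, so `d_i = 0` and the factor equals `1` for `i > a`; hence the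
(finite) product may be taken over `1 ≤ i ≤ a`. -/
theorem nine_dvd_prod_choose (χ : ℤ) (a : ℕ) (ha : 0 < a) (ha3 : 3 ∣ a)
    (p : Nat.Partition a) (hpart : ∃ x ∈ p.parts, ¬ 3 ∣ x) :
    9 ∣ ∏ i ∈ Finset.range a,
        Ring.choose (3 * ((i : ℤ) + 1) * χ - 1 + ((partSeq p i - partSeq p (i + 1) : ℕ) : ℤ))
          (partSeq p i - partSeq p (i + 1)) := by
  set D : ℕ → ℕ := fun i => partSeq p i - partSeq p (i+1) with hD
  set f : ℕ → ℤ := fun i => Ring.choose (3 * ((i : ℤ) + 1) * χ - 1 + (D i : ℤ)) (D i) with hf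
  have hform : ∀ i, f i = Ring.choose (3 * (((i:ℤ)+1)*χ) - 1 + (D i : ℤ)) (D i) := by
    intro i
    have e : 3 * ((i : ℤ) + 1) * χ - 1 + (D i:ℤ) = 3*(((i:ℤ)+1)*χ) - 1 + (D i:ℤ) := by ring
    simp only [hf]
    rw [e]
  -- existence of an index with 3 ∤ D i
  have hex : ∃ i ∈ Finset.range a, ¬ 3 ∣ D i := by
    by_contra hall
    push_neg at hall
    obtain ⟨x, hx, hx3⟩ := hpart
    have hxl : x ∈ p.parts.sort (· ≥ ·) := (Multiset.mem_sort _).mpr hx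
    obtain ⟨i, hi, hix⟩ := List.mem_iff_getElem.mp hxl
    have hia : i < a := lt_of_lt_of_le hi (length_le p)
    have hpi : partSeq p i = x := by
      unfold partSeq; rw [List.getD_eq_getElem _ _ hi, hix]
    apply hx3
    rw [← hpi, telescope p (a - i) i (by omega)]
    exact Finset.dvd_sum fun j hj => hall j (by simp at hj ⊢; omega)
  obtain ⟨i₀, hi₀r, hi₀⟩ := hex
  by_cases htwo : ∃ j ∈ Finset.range a, j ≠ i₀ ∧ ¬ 3 ∣ D j
  · obtain ⟨j, hjr, hji, hj⟩ := htwo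
    have h1 : (3:ℤ) ∣ f i₀ := by rw [hform]; exact C1 _ _ hi₀
    have h2 : (3:ℤ) ∣ f j := by rw [hform]; exact C1 _ _ hj
    have : (9:ℤ) = 3 * 3 := by norm_num
    rw [this, ← Finset.mul_prod_erase _ f hi₀r]
    exact mul_dvd_mul h1 (h2.trans (Finset.dvd_prod_of_mem f (Finset.mem_erase.mpr ⟨hji, hjr⟩)))
  · -- i₀ is unique: show 3 ∣ i₀ + 1, apply C2
    push_neg at htwo
    have hsum : ∑ j ∈ Finset.range a, (j+1) * D j = a := weighted_sum p
    have hdvd_rest : 3 ∣ ∑ j ∈ (Finset.range a).erase i₀, (j+1) * D j := by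
      apply Finset.dvd_sum
      intro j hj
      obtain ⟨hji, hjr⟩ := Finset.mem_erase.mp hj
      exact Dvd.dvd.mul_left (htwo j hjr hji) _
    rw [← Finset.add_sum_erase _ _ hi₀r] at hsum
    have hkey : 3 ∣ (i₀ + 1) * D i₀ := by omega
    have hi₀1 : 3 ∣ (i₀ + 1) := by
      rcases (Nat.Prime.dvd_mul (by norm_num)).mp hkey with h | h
      · exact h
      · exact absurd h hi₀
    have h9 : (9:ℤ) ∣ f i₀ := by
      rw [hform]
      apply C2 _ _ _ hi₀
      have : ((i₀:ℤ) + 1) = ((i₀ + 1 : ℕ) : ℤ) := by push_cast; ring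
      rw [this]
      exact Dvd.dvd.mul_right (by exact_mod_cast Int.natCast_dvd_natCast.mpr hi₀1) χ
    exact h9.trans (Finset.dvd_prod_of_mem f hi₀r)
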